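/- Let I_{n,k} denote the number of 021-avoiding inversion sequences of length n with exactly k initial zeros. Then I_{1,1} = 1, and for n ≥ 2: I_{n,1} = Σ_{k=1}^{n-1} 2^{k-1} I_{n-1,k}, and for 2 ≤ i ≤ n: I_{n,i} = I_{n-1,i-1} + Σ_{k=i}^{n-1} 2^{k-i} I_{n-1,k}. -/

import Mathlib

open Finset
open scoped Classical

/-- Number of components of a permutation of `Fin n` (0-based version of
`|{i ∈ [n] : π(j) ≤ i for all j ≤ i}|`). -/
def comps {n : ℕ} (π : Equiv.Perm (Fin n)) : ℕ :=
  (Finset.univ.filter fun i : Fin n => ∀ j, j ≤ i → π j ≤ i).card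

/-- Number of descents. -/
def des {n : ℕ} (π : Equiv.Perm (Fin n)) : ℕ :=
  (Finset.univ.filter fun i : Fin n =>
    ∃ h : (i : ℕ) + 1 < n, π ⟨(i : ℕ) + 1, h⟩ < π i).card

/-- Length of the initial ascending run: `min(DES(π) ∪ {n})` with 1-based descent positions. -/
noncomputable def iar {n : ℕ} (π : Equiv.Perm (Fin n)) : ℕ :=
  sInf {k : ℕ | k = n ∨ 0 < k ∧ ∃ h : k < n, π ⟨k, h⟩ < π ⟨k - 1, by omega⟩}

/-- `π` contains the pattern `σ`. -/
def ContainsPat {n m : ℕ} (π : Equiv.Perm (Fin n)) (σ : Equiv.Perm (Fin m)) : Prop :=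
  ∃ f : Fin m → Fin n, StrictMono f ∧ ∀ a b : Fin m, σ a < σ b ↔ π (f a) < π (f b)

/-- `π` avoids the pattern `σ`. -/
def AvoidsPat {n m : ℕ} (π : Equiv.Perm (Fin n)) (σ : Equiv.Perm (Fin m)) : Prop :=
  ¬ ContainsPat π σ

def pat123 : Equiv.Perm (Fin 3) := ⟨![0, 1, 2], ![0, 1, 2], by decide, by decide⟩
def pat132 : Equiv.Perm (Fin 3) := ⟨![0, 2, 1], ![0, 2, 1], by decide, by decide⟩
def pat213 : Equiv.Perm (Fin 3) := ⟨![1, 0, 2], ![1, 0, 2], by decide, by decide⟩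
def pat231 : Equiv.Perm (Fin 3) := ⟨![1, 2, 0], ![2, 0, 1], by decide, by decide⟩
def pat312 : Equiv.Perm (Fin 3) := ⟨![2, 0, 1], ![1, 2, 0], by decide, by decide⟩
def pat321 : Equiv.Perm (Fin 3) := ⟨![2, 1, 0], ![2, 1, 0], by decide, by decide⟩

/-- Direct sum of two permutations. -/
def directSum {m l : ℕ} (π : Equiv.Perm (Fin m)) (σ : Equiv.Perm (Fin l)) :
    Equiv.Perm (Fin (m + l)) :=
  finSumFinEquiv.permCongr (Equiv.sumCongr π σ)

/-- Direct sum of a finite family of permutations. -/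
def dsum : {k : ℕ} → (a : Fin k → ℕ) → ((i : Fin k) → Equiv.Perm (Fin (a i))) →
    Equiv.Perm (Fin (∑ i, a i))
  | 0, _, _ => Equiv.refl _
  | _ + 1, a, τ =>
      (finCongr (Fin.sum_univ_succ a).symm).permCongr
        (directSum (τ 0) (dsum (fun i => a i.succ) (fun i => τ i.succ)))

/-- Set of values of left-to-right maxima. -/
noncomputable def LMAX {n : ℕ} (π : Equiv.Perm (Fin n)) : Finset (Fin n) :=
  Finset.univ.filter fun v => ∃ i, π i = v ∧ ∀ j, j < i → π j < v

/-- Set of values of left-to-right minima. -/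
noncomputable def LMIN {n : ℕ} (π : Equiv.Perm (Fin n)) : Finset (Fin n) :=
  Finset.univ.filter fun v => ∃ i, π i = v ∧ ∀ j, j < i → v < π j

/-- Set of descent bottoms. -/
noncomputable def DESB {n : ℕ} (π : Equiv.Perm (Fin n)) : Finset (Fin n) :=
  Finset.univ.filter fun v => ∃ i : ℕ, ∃ h : i + 1 < n,
    π ⟨i + 1, h⟩ = v ∧ π ⟨i + 1, h⟩ < π ⟨i, by omega⟩

/-- `e` is an inversion sequence: `0 ≤ e_i < i` (1-based), i.e. `e i < i+1` (0-based). -/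
def InvSeq {n : ℕ} (e : Fin n → ℕ) : Prop := ∀ i : Fin n, e i < (i : ℕ) + 1

/-- `e` is 021-avoiding: its positive entries are weakly increasing. -/
def Avoid021 {n : ℕ} (e : Fin n → ℕ) : Prop :=
  ∀ i j : Fin n, i ≤ j → 0 < e i → 0 < e j → e i ≤ e j

/-- Number of initial zeros of `e`: the 0-based position of the first nonzero
entry (or `n` if all entries are zero). -/
noncomputable def izero {n : ℕ} (e : Fin n → ℕ) : ℕ :=
  sInf {i : ℕ | i = n ∨ ∃ h : i < n, e ⟨i, h⟩ ≠ 0}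

/-- `I n k`: the number of 021-avoiding inversion sequences of length `n` with
exactly `k` initial zeros. -/
noncomputable def numInvSeq (n k : ℕ) : ℕ :=
  {e : Fin n → ℕ | InvSeq e ∧ Avoid021 e ∧ izero e = k}.ncard

/- ------------------ auxiliary development ------------------ -/

section Aux

/-- The set counted by `numInvSeq`. -/
def ASet (n i : ℕ) : Set (Fin n → ℕ) := {e | InvSeq e ∧ Avoid021 e ∧ izero e = i}

lemma numInvSeq_eq_ncard (n i : ℕ) : numInvSeq n i = (ASet n i).ncard := rfl

lemma izero_set_nonempty {n : ℕ} (e : Fin n → ℕ) :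
    {i : ℕ | i = n ∨ ∃ h : i < n, e ⟨i, h⟩ ≠ 0}.Nonempty := ⟨n, Or.inl rfl⟩

lemma izero_le {n : ℕ} (e : Fin n → ℕ) : izero e ≤ n :=
  Nat.sInf_le (Or.inl rfl)

lemma izero_zero_of_lt {n : ℕ} {e : Fin n → ℕ} (j : Fin n) (hj : (j : ℕ) < izero e) :
    e j = 0 := by
  by_contra h
  have hmem : (j : ℕ) ∈ {i : ℕ | i = n ∨ ∃ h : i < n, e ⟨i, h⟩ ≠ 0} :=
    Or.inr ⟨j.isLt, by simpa using h⟩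
  have := Nat.sInf_le hmem
  unfold izero at hj
  omega

lemma izero_spec {n : ℕ} (e : Fin n → ℕ) :
    izero e = n ∨ ∃ h : izero e < n, e ⟨izero e, h⟩ ≠ 0 :=
  Nat.sInf_mem (izero_set_nonempty e)

lemma izero_ne_zero {n : ℕ} {e : Fin n → ℕ} (h : izero e < n) :
    e ⟨izero e, h⟩ ≠ 0 := by
  rcases izero_spec e with h' | ⟨h'', hne⟩
  · omega
  · exact hne

lemma izero_eq_of {n i : ℕ} {e : Fin n → ℕ} (hi : i ≤ n)
    (h0 : ∀ j : Fin n, (j : ℕ) < i → e j = 0)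
    (h1 : ∀ h : i < n, e ⟨i, h⟩ ≠ 0) : izero e = i := by
  refine le_antisymm (Nat.sInf_le ?_) (le_csInf (izero_set_nonempty e) ?_)
  · rcases eq_or_lt_of_le hi with h | h
    · exact Or.inl h
    · exact Or.inr ⟨h, h1 h⟩
  · rintro b (rfl | ⟨hb, hbne⟩)
    · exact hi
    · by_contra hlt
      exact hbne (h0 ⟨b, hb⟩ (show b < i by omega))

lemma ASet_finite (n i : ℕ) : (ASet n i).Finite := by
  apply Set.Finite.subset (Set.Finite.pi (fun j : Fin n => Set.finite_Iio ((j : ℕ) + 1)))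
  intro e he
  rw [Set.mem_pi]
  intro j _
  exact he.1 j

/-- Insert a zero in front, shift positive entries up by one, and put `1` at
position `i` and at the positions in `T`. -/
def insMap (m i : ℕ) (e' : Fin m → ℕ) (T : Finset ℕ) : Fin (m + 1) → ℕ :=
  fun j => Fin.cases 0 (fun j' : Fin m =>
    if e' j' ≠ 0 then e' j' + 1
    else if (j' : ℕ) + 1 = i ∨ (j' : ℕ) + 1 ∈ T then 1 else 0) j

@[simp] lemma insMap_zero (m i : ℕ) (e' : Fin m → ℕ) (T : Finset ℕ) :
    insMap m i e' T 0 = 0 := rfl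

@[simp] lemma insMap_succ (m i : ℕ) (e' : Fin m → ℕ) (T : Finset ℕ) (j' : Fin m) :
    insMap m i e' T j'.succ =
      if e' j' ≠ 0 then e' j' + 1
      else if (j' : ℕ) + 1 = i ∨ (j' : ℕ) + 1 ∈ T then 1 else 0 := by
  simp [insMap]

/-- Delete the first entry, decrement entries `≥ 2`, kill entries `≤ 1`. -/
def delMap (m : ℕ) (e : Fin (m + 1) → ℕ) : Fin m → ℕ :=
  fun j' => if 2 ≤ e j'.succ then e j'.succ - 1 else 0

lemma del_ins (m i : ℕ) (e' : Fin m → ℕ) (T : Finset ℕ) :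
    delMap m (insMap m i e' T) = e' := by
  funext j'
  simp only [delMap, insMap_succ]
  split_ifs <;> omega

def CSet (m i k : ℕ) : Set (Fin (m + 1) → ℕ) :=
  {e | e ∈ ASet (m + 1) i ∧ izero (delMap m e) = k}

lemma CSet_finite (m i k : ℕ) : (CSet m i k).Finite :=
  (ASet_finite (m + 1) i).subset fun _ he => he.1

end Aux

section Bij

lemma bijOn_ins (m i k : ℕ) (hi1 : 1 ≤ i) (hik : i - 1 ≤ k) (hkm : k ≤ m) :
    Set.BijOn (fun p : (Fin m → ℕ) × Finset ℕ => insMap m i p.1 p.2)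
      (ASet m k ×ˢ {T : Finset ℕ | T ⊆ Finset.Icc (i + 1) k}) (CSet m i k) := by
  constructor
  · -- MapsTo
    rintro ⟨e', T⟩ ⟨⟨hinv, havd, hiz⟩, hT⟩
    simp only [Set.mem_setOf_eq] at hT
    replace hinv : InvSeq e' := hinv
    replace havd : Avoid021 e' := havd
    replace hiz : izero e' = k := hiz
    have hzero : ∀ j' : Fin m, (j' : ℕ) < k → e' j' = 0 := fun j' h =>
      izero_zero_of_lt j' (by omega)
    refine ⟨⟨?_, ?_, ?_⟩, ?_⟩
    · -- InvSeq
      intro j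
      cases j using Fin.cases with
      | zero => simp
      | succ j' =>
        have := hinv j'
        simp only [insMap_succ, Fin.val_succ]
        split_ifs <;> omega
    · -- Avoid021
      intro a b hab ha hb
      cases a using Fin.cases with
      | zero => simp at ha
      | succ a' =>
        cases b using Fin.cases with
        | zero => simp at hb
        | succ b' =>
          have hab' : a' ≤ b' := by
            rwa [Fin.succ_le_succ_iff] at hab
          simp only [insMap_succ] at ha hb ⊢
          by_cases hA : e' a' = 0 <;> by_cases hB : e' b' = 0
          · rw [if_neg (show ¬ e' a' ≠ 0 by simp [hA])] at ha ⊢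
            rw [if_neg (show ¬ e' b' ≠ 0 by simp [hB])] at hb ⊢
            split_ifs at ha hb ⊢ <;> omega
          · rw [if_neg (show ¬ e' a' ≠ 0 by simp [hA])] at ha ⊢
            rw [if_pos hB] at hb ⊢
            split_ifs <;> omega
          · -- a positive shifted, b is a `1`: contradiction
            exfalso
            rw [if_neg (show ¬ e' b' ≠ 0 by simp [hB])] at hb
            have hP : (b' : ℕ) + 1 = i ∨ (b' : ℕ) + 1 ∈ T := by
              by_contra hc
              rw [if_neg hc] at hb
              omega
            have hblt : (b' : ℕ) < k := by
              rcases hP with hP | hP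
              · -- b' + 1 = i
                rcases Nat.lt_or_ge (b' : ℕ) k with h | h
                · exact h
                · -- then k = b' < m, and e' at k must be nonzero, but it is 0
                  exfalso
                  have hkm' : k < m := lt_of_le_of_lt h b'.isLt
                  have := izero_ne_zero (e := e') (by omega : izero e' < m)
                  have hbk : (b' : ℕ) = k := by omega
                  apply this
                  have : (⟨izero e', by omega⟩ : Fin m) = b' := by
                    apply Fin.ext; simp [hiz, hbk]
                  rw [this]; exact hB
              · have := hT hP
                simp only [Finset.mem_Icc] at this
                omega
            exact hA (hzero a' (by omega))
          · rw [if_pos hA] at ha ⊢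
            rw [if_pos hB] at hb ⊢
            exact Nat.add_le_add_right
              (havd a' b' hab' (Nat.pos_of_ne_zero hA) (Nat.pos_of_ne_zero hB)) 1
    · -- izero = i
      refine izero_eq_of (by omega) ?_ ?_
      · intro j hj
        cases j using Fin.cases with
        | zero => simp
        | succ j' =>
          simp only [Fin.val_succ] at hj
          have h0 : e' j' = 0 := hzero j' (by omega)
          simp only [insMap_succ, h0, ne_eq, not_true_eq_false, if_false]
          rw [if_neg]
          rintro (h | h)
          · omega
          · have := hT h
            simp only [Finset.mem_Icc] at this
            omega
      · intro h
        set j' : Fin m := ⟨i - 1, by omega⟩ with hj'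
        have hji : (⟨i, h⟩ : Fin (m + 1)) = j'.succ := by
          apply Fin.ext; simp [hj']; omega
        show insMap m i e' T ⟨i, h⟩ ≠ 0
        rw [hji, insMap_succ]
        by_cases hE : e' j' = 0
        · rw [if_neg (by simpa using hE), if_pos (Or.inl (by simp [hj']; omega))]
          exact one_ne_zero
        · rw [if_pos hE]
          exact Nat.succ_ne_zero _
    · -- izero of delMap = k
      show izero (delMap m (insMap m i e' T)) = k
      rw [del_ins]
      exact hiz
  constructor
  · -- InjOn
    have key : ∀ e' : Fin m → ℕ, izero e' = k →
        ∀ T T' : Finset ℕ, T ⊆ Finset.Icc (i + 1) k → T' ⊆ Finset.Icc (i + 1) k →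
        insMap m i e' T = insMap m i e' T' → ∀ t, t ∈ T → t ∈ T' := by
      intro e' hiz T T' hT hT' heq t ht
      have hIcc := hT ht
      simp only [Finset.mem_Icc] at hIcc
      set j' : Fin m := ⟨t - 1, by omega⟩ with hj'
      have h0 : e' j' = 0 := izero_zero_of_lt j' (by simp [hj']; omega)
      have heqj := congrFun heq j'.succ
      simp only [insMap_succ, h0, ne_eq, not_true_eq_false, if_false] at heqj
      rw [if_pos (Or.inr (by simpa [hj', Nat.sub_add_cancel (by omega : 1 ≤ t)] using ht))] at heqj
      by_cases hP : (j' : ℕ) + 1 = i ∨ (j' : ℕ) + 1 ∈ T'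
      · rcases hP with hP | hP
        · simp [hj'] at hP; omega
        · simpa [hj', Nat.sub_add_cancel (by omega : 1 ≤ t)] using hP
      · rw [if_neg hP] at heqj
        omega
    rintro ⟨e1, T1⟩ ⟨he1, hT1⟩ ⟨e2, T2⟩ ⟨he2, hT2⟩ heq
    simp only at heq
    simp only [Set.mem_setOf_eq] at hT1 hT2
    have hee : e1 = e2 := by
      rw [← del_ins m i e1 T1, ← del_ins m i e2 T2, heq]
    subst hee
    have hTT : T1 = T2 := by
      apply Finset.Subset.antisymm
      · exact fun t ht => key e1 he1.2.2 T1 T2 hT1 hT2 heq t ht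
      · exact fun t ht => key e1 he1.2.2 T2 T1 hT2 hT1 heq.symm t ht
    rw [hTT]
  · -- SurjOn
    intro e he
    obtain ⟨⟨hinv, havd, hiz⟩, hdel⟩ := he
    set e' : Fin m → ℕ := delMap m e with he'
    set T : Finset ℕ := (Finset.Icc (i + 1) k).filter
      (fun t => ∃ h : t < m + 1, e ⟨t, h⟩ = 1) with hTdef
    have hzero : ∀ j : Fin (m + 1), (j : ℕ) < i → e j = 0 := fun j h =>
      izero_zero_of_lt j (by omega)
    refine ⟨(e', T), ⟨⟨?_, ?_, hdel⟩, ?_⟩, ?_⟩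
    · -- InvSeq e'
      intro j'
      have := hinv j'.succ
      simp only [Fin.val_succ] at this
      simp only [he', delMap]
      split_ifs <;> omega
    · -- Avoid021 e'
      intro a b hab ha hb
      simp only [he', delMap] at ha hb ⊢
      split_ifs at ha hb ⊢ with h1 h2 <;> try omega
      have := havd a.succ b.succ (by rwa [Fin.succ_le_succ_iff]) (by omega) (by omega)
      omega
    · simp only [Set.mem_setOf_eq, hTdef]
      exact Finset.filter_subset _ _
    · -- insMap e' T = e
      simp only
      funext j
      cases j using Fin.cases with
      | zero =>
        rw [insMap_zero]
        exact (hzero 0 (by simp; omega)).symm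
      | succ j' =>
        rw [insMap_succ]
        rcases Nat.lt_or_ge (e j'.succ) 1 with hv | hv
        · -- e j'.succ = 0
          have hv0 : e j'.succ = 0 := by omega
          have h0 : e' j' = 0 := by simp [he', delMap, hv0]
          rw [if_neg (by simpa using h0), if_neg, hv0]
          rintro (h | h)
          · -- j' + 1 = i, but e at i is nonzero
            have him : i < m + 1 := by omega
            have := izero_ne_zero (e := e) (by omega : izero e < m + 1)
            apply this
            have hfe : (⟨izero e, by omega⟩ : Fin (m + 1)) = j'.succ := by
              apply Fin.ext; simp [hiz]; omega
            rw [hfe]; exact hv0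
          · simp only [hTdef, Finset.mem_filter] at h
            obtain ⟨-, hlt, h1⟩ := h
            have : (⟨(j' : ℕ) + 1, hlt⟩ : Fin (m + 1)) = j'.succ := by
              apply Fin.ext; simp
            rw [this] at h1
            omega
        · rcases Nat.lt_or_ge (e j'.succ) 2 with hv2 | hv2
          · -- e j'.succ = 1
            have hv1 : e j'.succ = 1 := by omega
            have h0 : e' j' = 0 := by simp [he', delMap, hv1]
            rw [if_neg (by simpa using h0), hv1]
            by_cases hc : (j' : ℕ) + 1 = i
            · rw [if_pos (Or.inl hc)]
            · rw [if_pos]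
              right
              simp only [hTdef, Finset.mem_filter, Finset.mem_Icc]
              refine ⟨⟨?_, ?_⟩, (by have := j'.isLt; omega : (j' : ℕ) + 1 < m + 1), ?_⟩
              · -- i + 1 ≤ j' + 1
                have : ¬ ((j'.succ : ℕ) < izero e) := by
                  intro hcon
                  have := izero_zero_of_lt j'.succ hcon
                  omega
                simp only [Fin.val_succ, hiz] at this
                omega
              · -- j' + 1 ≤ k
                by_contra hgt
                push_neg at hgt
                have hkm' : k < m := by
                  have := j'.isLt; omega
                have hne := izero_ne_zero (e := e') (by omega : izero e' < m)
                set K : Fin m := ⟨k, by omega⟩ with hK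
                have hKe : (⟨izero e', by omega⟩ : Fin m) = K := by
                  apply Fin.ext; simp [hdel, hK]
                rw [hKe] at hne
                have hK2 : 2 ≤ e K.succ := by
                  by_contra hc2
                  apply hne
                  rw [he']
                  simp only [delMap]
                  rw [if_neg hc2]
                have := havd K.succ j'.succ
                  (by rw [Fin.le_def]; simp [hK]; omega) (by omega) (by omega)
                omega
              · -- value at position j'+1 is 1 (restated with mk)
                have hmk : (⟨(j' : ℕ) + 1, by have := j'.isLt; omega⟩ : Fin (m + 1)) = j'.succ := by
                  apply Fin.ext; simp
                rw [hmk]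
                exact hv1
          · -- e j'.succ ≥ 2
            have h0 : e' j' = e j'.succ - 1 := by simp [he', delMap, hv2]
            rw [if_pos (by omega)]
            omega

end Bij

section Count

lemma ncard_biUnion_aux {α ι : Type*} (s : Finset ι) (f : ι → Set α)
    (hf : ∀ i, (f i).Finite)
    (hd : ∀ i j, i ≠ j → Disjoint (f i) (f j)) :
    (⋃ i ∈ s, f i).ncard = ∑ i ∈ s, (f i).ncard := by
  induction s using Finset.induction_on with
  | empty => simp
  | @insert a s' ha ih =>
    have hfin : (⋃ i ∈ s', f i).Finite :=
      Set.Finite.biUnion s'.finite_toSet fun i _ => hf i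
    have hdis : Disjoint (f a) (⋃ i ∈ s', f i) := by
      simp only [Set.disjoint_iUnion_right]
      exact fun j hj => hd a j (fun h => ha (h ▸ hj))
    rw [Finset.set_biUnion_insert, Finset.sum_insert ha, ← ih]
    exact Set.ncard_union_eq hdis (hf a) hfin

lemma ncard_prod_aux {α β : Type*} (s : Set α) (t : Set β) :
    (s ×ˢ t).ncard = s.ncard * t.ncard := by
  rw [← Nat.card_coe_set_eq, ← Nat.card_coe_set_eq, ← Nat.card_coe_set_eq,
      Nat.card_congr (Equiv.Set.prod s t), Nat.card_prod]

lemma ncard_powerset_aux (s : Finset ℕ) :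
    {T : Finset ℕ | T ⊆ s}.ncard = 2 ^ s.card := by
  have h : {T : Finset ℕ | T ⊆ s} = ↑s.powerset := by
    ext T; simp [Finset.mem_powerset]
  rw [h, Set.ncard_coe_finset, Finset.card_powerset]

lemma ncard_CSet (m i k : ℕ) (hi1 : 1 ≤ i) (hik : i - 1 ≤ k) (hkm : k ≤ m) :
    (CSet m i k).ncard = 2 ^ (k - i) * (ASet m k).ncard := by
  have hb := bijOn_ins m i k hi1 hik hkm
  rw [← hb.image_eq, Set.ncard_image_of_injOn hb.injOn, ncard_prod_aux,
      ncard_powerset_aux, Nat.card_Icc]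
  have h1 : k + 1 - (i + 1) = k - i := by omega
  rw [h1, mul_comm]

lemma ASet_eq_biUnion (m i : ℕ) (hi1 : 1 ≤ i) (hi2 : i ≤ m + 1) :
    ASet (m + 1) i = ⋃ k ∈ Finset.Icc (i - 1) m, CSet m i k := by
  ext e
  simp only [Set.mem_iUnion, Finset.mem_Icc, CSet, Set.mem_setOf_eq, exists_prop]
  constructor
  · intro he
    refine ⟨izero (delMap m e), ⟨⟨?_, izero_le _⟩, he, rfl⟩⟩
    by_contra hlt
    push_neg at hlt
    have h1 : izero (delMap m e) < m := by omega
    apply izero_ne_zero (e := delMap m e) h1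
    simp only [delMap]
    have h2 : e (⟨izero (delMap m e), h1⟩ : Fin m).succ = 0 := by
      apply izero_zero_of_lt
      rw [he.2.2]
      simp only [Fin.val_succ]
      omega
    rw [h2]
    simp
  · rintro ⟨k, -, heA, -⟩
    exact heA

lemma CSet_disjoint (m i : ℕ) : ∀ a b : ℕ, a ≠ b → Disjoint (CSet m i a) (CSet m i b) := by
  intro a b hab
  rw [Set.disjoint_left]
  intro e hea heb
  exact hab (hea.2.symm.trans heb.2)

lemma main_rec (m i : ℕ) (hi1 : 1 ≤ i) (hi2 : i ≤ m + 1) :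
    numInvSeq (m + 1) i
      = numInvSeq m (i - 1) + ∑ k ∈ Finset.Icc i m, 2 ^ (k - i) * numInvSeq m k := by
  rw [numInvSeq_eq_ncard, ASet_eq_biUnion m i hi1 hi2,
      ncard_biUnion_aux _ _ (CSet_finite m i) (CSet_disjoint m i)]
  have hsplit : Finset.Icc (i - 1) m = insert (i - 1) (Finset.Icc i m) := by
    ext x
    simp only [Finset.mem_Icc, Finset.mem_insert]
    omega
  rw [hsplit, Finset.sum_insert (by simp only [Finset.mem_Icc]; omega)]
  congr 1
  · rw [ncard_CSet m i (i - 1) hi1 le_rfl (by omega)]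
    have h0 : (i - 1) - i = 0 := by omega
    rw [h0, pow_zero, one_mul, numInvSeq_eq_ncard]
  · refine Finset.sum_congr rfl fun k hk => ?_
    simp only [Finset.mem_Icc] at hk
    rw [ncard_CSet m i k hi1 (by omega) hk.2, numInvSeq_eq_ncard]

lemma numInvSeq_zero_zero : numInvSeq 0 0 = 1 := by
  rw [numInvSeq_eq_ncard]
  have h : ASet 0 0 = Set.univ := by
    ext e
    simp only [ASet, Set.mem_setOf_eq, Set.mem_univ, iff_true]
    refine ⟨fun j => j.elim0, fun a => a.elim0, ?_⟩
    exact izero_eq_of le_rfl (fun j => j.elim0) (fun h => absurd h (by omega))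
  rw [h, Set.ncard_univ]
  exact Nat.card_unique

lemma numInvSeq_pos_zero (m : ℕ) (hm : 1 ≤ m) : numInvSeq m 0 = 0 := by
  rw [numInvSeq_eq_ncard]
  have h : ASet m 0 = ∅ := by
    ext e
    simp only [ASet, Set.mem_setOf_eq, Set.mem_empty_iff_false, iff_false, not_and]
    intro hinv havd hiz
    have h1 : izero e < m := by omega
    apply izero_ne_zero (e := e) h1
    have h2 := hinv ⟨izero e, h1⟩
    simp only [hiz] at h2 ⊢
    omega
  simp [h]

end Count

/-- recurrence for `I_{n,k}`. -/
theorem invseq_recurrence :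
    numInvSeq 1 1 = 1
    ∧ (∀ n : ℕ, 2 ≤ n →
        numInvSeq n 1 = ∑ k ∈ Finset.Icc 1 (n - 1), 2 ^ (k - 1) * numInvSeq (n - 1) k)
    ∧ (∀ n i : ℕ, 2 ≤ i → i ≤ n →
        numInvSeq n i = numInvSeq (n - 1) (i - 1)
          + ∑ k ∈ Finset.Icc i (n - 1), 2 ^ (k - i) * numInvSeq (n - 1) k) := by
  refine ⟨?_, ?_, ?_⟩
  · have h := main_rec 0 1 le_rfl le_rfl
    simpa [numInvSeq_zero_zero] using h
  · intro n hn
    obtain ⟨m, rfl⟩ : ∃ m, n = m + 1 := ⟨n - 1, by omega⟩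
    have h := main_rec m 1 le_rfl (by omega)
    simpa [Nat.add_sub_cancel, numInvSeq_pos_zero m (by omega)] using h
  · intro n i hi2 hin
    obtain ⟨m, rfl⟩ : ∃ m, n = m + 1 := ⟨n - 1, by omega⟩
    simpa [Nat.add_sub_cancel] using main_rec m i (by omega) hin
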